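/- There exist constants c₁, c₂ > 0, depending only on α and d, with the following property. Let n ≥ 1 and let z_0, …, z_n be a path in ℤ^d such that max{|z_0|, |z_n|, |z_0 − z_n|_1} ≥ n. Then c₁ · n · (max(|z_0|,|z_n|))^α ≤ Σ_{i=0}^n ν_{z_i} ≤ c₂ · n · (max(|z_0|,|z_n|))^α. -/

import Mathlib

open scoped BigOperators

/-- ℓ∞ norm on ℤ^d, as a natural number. -/
def linf {d : ℕ} (x : Fin d → ℤ) : ℕ :=
  Finset.univ.sup fun i => (x i).natAbs

/-- ℓ¹ norm on ℤ^d, as a natural number. -/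
def l1 {d : ℕ} (x : Fin d → ℤ) : ℕ :=
  ∑ i, (x i).natAbs

/-- `ν x = (max(|x|,1))^α`. -/
noncomputable def nu (α : ℝ) {d : ℕ} (x : Fin d → ℤ) : ℝ :=
  ((max (linf x) 1 : ℕ) : ℝ) ^ α

/-- The conductance `μ x y = (max(|x|,|y|))^(-α)` if `|x-y|₁ = 1`, and `0` otherwise. -/
noncomputable def mu (α : ℝ) {d : ℕ} (x y : Fin d → ℤ) : ℝ :=
  if l1 (x - y) = 1 then ((max (linf x) (linf y) : ℕ) : ℝ) ^ (-α) else 0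

/-- `z 0, …, z m` is a path: consecutive points are at ℓ¹-distance one. -/
def IsPath {d : ℕ} (z : ℕ → Fin d → ℤ) (m : ℕ) : Prop :=
  ∀ i < m, l1 (z (i + 1) - z i) = 1

/-- The metric `ρ(x,y)`: `0` if `x = y`, otherwise the infimum of `∑ ν (z i)` over
paths from `x` to `y`. -/
noncomputable def rho (α : ℝ) {d : ℕ} (x y : Fin d → ℤ) : ℝ :=
  if x = y then 0
  else sInf {S : ℝ | ∃ (m : ℕ) (z : ℕ → Fin d → ℤ), IsPath z m ∧ z 0 = x ∧ z m = y ∧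
    S = ∑ i ∈ Finset.range (m + 1), nu α (z i)}

/-- `ρ_x(r) = (max(|x|,r))^α · r`. -/
noncomputable def rhox (α : ℝ) {d : ℕ} (x : Fin d → ℤ) (r : ℝ) : ℝ :=
  (max ((linf x : ℕ) : ℝ) r) ^ α * r

/-- `ρ_x⁻¹(r) = (max(|x|, r^{1/(1+α)}))^{-α} · r`, the inverse function of `ρ_x`. -/
noncomputable def rhoxInv (α : ℝ) {d : ℕ} (x : Fin d → ℤ) (r : ℝ) : ℝ :=
  (max ((linf x : ℕ) : ℝ) (r ^ (1 / (1 + α)))) ^ (-α) * r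

/-- `V(x,r) = ν(B(x,r))`, the ν-volume of the ℓ∞-ball of radius `r` about `x`. -/
noncomputable def V (α : ℝ) {d : ℕ} (x : Fin d → ℤ) (r : ℝ) : ℝ :=
  ∑' y : {y : Fin d → ℤ // ((linf (y - x) : ℕ) : ℝ) ≤ r}, nu α y.1

/-- `V_ρ(x,r) = ν(B_ρ(x,r))`, the ν-volume of the ρ-ball of radius `r` about `x`. -/
noncomputable def Vrho (α : ℝ) {d : ℕ} (x : Fin d → ℤ) (r : ℝ) : ℝ :=
  ∑' y : {y : Fin d → ℤ // rho α x y ≤ r}, nu α y.1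

section Basic
variable {d : ℕ}

lemma l1_neg (x : Fin d → ℤ) : l1 (-x) = l1 x := by
  simp [l1]

lemma l1_sub_comm (x y : Fin d → ℤ) : l1 (x - y) = l1 (y - x) := by
  rw [← neg_sub y x, l1_neg]

lemma l1_add_le (x y : Fin d → ℤ) : l1 (x + y) ≤ l1 x + l1 y := by
  unfold l1
  rw [← Finset.sum_add_distrib]
  exact Finset.sum_le_sum fun i _ => Int.natAbs_add_le _ _

lemma linf_le_l1 (x : Fin d → ℤ) : linf x ≤ l1 x :=
  Finset.sup_le fun i _ =>
    Finset.single_le_sum (f := fun i => (x i).natAbs) (fun _ _ => Nat.zero_le _) (Finset.mem_univ i)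

lemma l1_le_d_linf (x : Fin d → ℤ) : l1 x ≤ d * linf x := by
  unfold l1
  calc ∑ i, (x i).natAbs ≤ ∑ _i : Fin d, linf x :=
        Finset.sum_le_sum fun i _ => Finset.le_sup (f := fun i => (x i).natAbs) (Finset.mem_univ i)
    _ = d * linf x := by simp [Finset.sum_const, Finset.card_univ, mul_comm]

lemma linf_add_le (x y : Fin d → ℤ) : linf (x + y) ≤ linf x + linf y :=
  Finset.sup_le fun i _ => le_trans (Int.natAbs_add_le _ _)
    (add_le_add (Finset.le_sup (f := fun i => (x i).natAbs) (Finset.mem_univ i))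
      (Finset.le_sup (f := fun i => (y i).natAbs) (Finset.mem_univ i)))

lemma l1_sub_le (x y : Fin d → ℤ) : l1 x ≤ l1 y + l1 (x - y) := by
  have h := l1_add_le y (x - y)
  have e : y + (x - y) = x := by abel
  rwa [e] at h

lemma linf_sub_le (x y : Fin d → ℤ) : linf x ≤ linf y + l1 (x - y) := by
  have h := linf_add_le y (x - y)
  have e : y + (x - y) = x := by abel
  rw [e] at h
  exact le_trans h (Nat.add_le_add_left (linf_le_l1 _) _)

lemma l1_sub_le' (x y : Fin d → ℤ) : l1 (x - y) ≤ l1 x + l1 y := by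
  rw [sub_eq_add_neg]
  simpa [l1_neg] using l1_add_le x (-y)

lemma path_l1_le {z : ℕ → Fin d → ℤ} {n : ℕ} (hz : IsPath z n) :
    ∀ j ≤ n, ∀ i ≤ j, l1 (z j - z i) ≤ j - i := by
  intro j hj
  induction j with
  | zero =>
    intro i hi
    have : i = 0 := Nat.le_zero.mp hi
    subst this
    simp [l1]
  | succ j ih =>
    intro i hi
    rcases Nat.eq_or_lt_of_le hi with h | h
    · subst h; simp [l1]
    · have hij : i ≤ j := Nat.lt_succ_iff.mp h
      have h1 := ih (le_trans (Nat.le_succ j) hj) i hij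
      have h2 : l1 (z (j+1) - z j) = 1 := hz j hj
      have h3 : l1 (z (j+1) - z i) ≤ l1 (z (j+1) - z j) + l1 (z j - z i) := by
        have h4 := l1_add_le (z (j+1) - z j) (z j - z i)
        have e : (z (j+1) - z j) + (z j - z i) = z (j+1) - z i := by abel
        rwa [e] at h4
      omega

lemma nu_pos (α : ℝ) {d : ℕ} (x : Fin d → ℤ) : 0 < nu α x :=
  Real.rpow_pos_of_pos (by exact_mod_cast Nat.lt_of_lt_of_le Nat.zero_lt_one (le_max_right _ _)) α

end Basic

lemma sum_max_rpow {α : ℝ} (hα : -1 < α) (hα0 : α < 0) (n : ℕ) (hn : 1 ≤ n) :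
    ∑ i ∈ Finset.range (n + 1), max (i : ℝ) 1 ^ α ≤ (2 + 1 / (1 + α)) * (n : ℝ) ^ (1 + α) := by
  have hp : (0:ℝ) < 1 + α := by linarith
  induction n, hn using Nat.le_induction with
  | base =>
    have e : ∑ i ∈ Finset.range 2, max (i : ℝ) 1 ^ α = 2 := by
      rw [Finset.sum_range_succ, Finset.sum_range_one]
      norm_num
    rw [e, Nat.cast_one, Real.one_rpow]
    have h1 : (0:ℝ) < 1 / (1 + α) := by positivity
    linarith
  | succ n hn ih =>
    have hn1 : (1:ℝ) ≤ (n:ℝ) := by exact_mod_cast hn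
    have hx0 : (0:ℝ) < (n:ℝ) + 1 := by linarith
    set x : ℝ := (n:ℝ) + 1 with hxdef
    have hx1 : (1:ℝ) ≤ x := by rw [hxdef]; linarith
    have hs1 : (1:ℝ)/x ≤ 1 := by rw [div_le_one hx0]; linarith
    have hbern : (1 + (-(1/x))) ^ (1+α) ≤ 1 + (1+α) * (-(1/x)) :=
      rpow_one_add_le_one_add_mul_self (by linarith) (le_of_lt hp) (by linarith)
    have e1 : 1 + (-(1/x)) = (x - 1)/x := by
      field_simp
      ring
    have e2 : ((x-1)/x) ^ (1+α) = (x-1)^(1+α) / x^(1+α) :=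
      Real.div_rpow (by linarith) (le_of_lt hx0) _
    have hxp : (0:ℝ) < x ^ (1+α) := Real.rpow_pos_of_pos hx0 _
    have e4 : x ^ (1 + α) / x = x ^ α := by
      have h := Real.rpow_sub hx0 (1 + α) 1
      rw [Real.rpow_one] at h
      have e : (1:ℝ) + α - 1 = α := by ring
      rw [e] at h
      exact h.symm
    have key : (x-1)^(1+α) + (1+α) * x^α ≤ x^(1+α) := by
      have h := hbern
      rw [e1, e2, div_le_iff₀ hxp] at h
      have e3 : (1 + (1+α)*(-(1/x))) * x^(1+α) = x^(1+α) - (1+α)*(x^(1+α)/x) := by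
        ring
      rw [e3, e4] at h
      linarith
    have exn : x - 1 = (n:ℝ) := by rw [hxdef]; ring
    rw [exn] at key
    -- now conclude
    rw [Finset.sum_range_succ]
    have emax : max ((n+1 : ℕ):ℝ) 1 = x := by
      rw [hxdef]; push_cast
      exact max_eq_left (by linarith)
    rw [emax]
    have ecast : ((n+1:ℕ):ℝ) = x := by rw [hxdef]; push_cast; ring
    rw [ecast]
    have hxα : (0:ℝ) < x ^ α := Real.rpow_pos_of_pos hx0 _
    have hC : (1:ℝ) ≤ (2 + 1/(1+α)) * (1+α) := by
      rw [add_mul, div_mul_cancel₀]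
      · linarith
      · linarith
    -- goal : ∑ + x^α ≤ C * x^(1+α)
    have hdiff : x ^ α ≤ (2 + 1/(1+α)) * (x^(1+α) - (n:ℝ)^(1+α)) := by
      have h1 : (1+α) * x^α ≤ x^(1+α) - (n:ℝ)^(1+α) := by linarith
      have hC0 : (0:ℝ) < 2 + 1/(1+α) := by positivity
      calc x ^ α = 1 * x ^ α := (one_mul _).symm
        _ ≤ ((2 + 1/(1+α)) * (1+α)) * x ^ α := by
            apply mul_le_mul_of_nonneg_right hC (le_of_lt hxα)
        _ = (2 + 1/(1+α)) * ((1+α) * x ^ α) := by ring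
        _ ≤ (2 + 1/(1+α)) * (x^(1+α) - (n:ℝ)^(1+α)) := by
            apply mul_le_mul_of_nonneg_left h1 (le_of_lt hC0)
    linarith

noncomputable def c1e (d : ℕ) (α : ℝ) : ℝ :=
  min ((2*(d:ℝ)+1) ^ α) ((2:ℝ) ^ (-α) / (4*(d:ℝ)))

noncomputable def c2e (d : ℕ) (α : ℝ) : ℝ :=
  2*(2*(d:ℝ)+1) ^ α + 2*(2:ℝ)^(-α) + (2 + 1/(1+α))*(2:ℝ)^(-α)
    + 2*(2 + 1/(1+α))*(d:ℝ)^(-α)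

lemma c1e_pos (d : ℕ) (hd : 1 ≤ d) (α : ℝ) : 0 < c1e d α := by
  have hdr : (1:ℝ) ≤ (d:ℝ) := by exact_mod_cast hd
  apply lt_min
  · exact Real.rpow_pos_of_pos (by linarith) α
  · apply div_pos (Real.rpow_pos_of_pos (by norm_num) _) (by linarith)

lemma c2e_pos (d : ℕ) (hd : 1 ≤ d) (α : ℝ) (hα : -1 < α) : 0 < c2e d α := by
  have hdr : (1:ℝ) ≤ (d:ℝ) := by exact_mod_cast hd
  have h1 : (0:ℝ) < (2*(d:ℝ)+1) ^ α := Real.rpow_pos_of_pos (by linarith) α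
  have h2 : (0:ℝ) < (2:ℝ)^(-α) := Real.rpow_pos_of_pos (by norm_num) _
  have h3 : (0:ℝ) < (d:ℝ)^(-α) := Real.rpow_pos_of_pos (by linarith) _
  have h4 : (0:ℝ) < 2 + 1/(1+α) := by
    have : (0:ℝ) < 1/(1+α) := div_pos one_pos (by linarith)
    linarith
  unfold c2e
  positivity

set_option maxHeartbeats 2000000 in
lemma aux_main (d : ℕ) (hd : 1 ≤ d) (α : ℝ) (hα : -1 < α) (n : ℕ) (hn : 1 ≤ n)
    (z : ℕ → Fin d → ℤ) (hz : IsPath z n) (hM : linf (z n) ≤ linf (z 0))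
    (hmax : n ≤ max (max (linf (z 0)) (linf (z n))) (l1 (z 0 - z n))) :
    c1e d α * n * ((linf (z 0) : ℕ) : ℝ) ^ α ≤ ∑ i ∈ Finset.range (n + 1), nu α (z i) ∧
    ∑ i ∈ Finset.range (n + 1), nu α (z i) ≤ c2e d α * n * ((linf (z 0) : ℕ) : ℝ) ^ α := by
  set M := linf (z 0) with hMdef
  have hdr : (1:ℝ) ≤ (d:ℝ) := by exact_mod_cast hd
  -- n ≤ 2dM and M ≥ 1
  have hL : l1 (z 0 - z n) ≤ 2*d*M := by
    have h1 := l1_sub_le' (z 0) (z n)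
    have h2 : l1 (z 0) ≤ d * M := by rw [hMdef]; exact l1_le_d_linf (z 0)
    have h3 := l1_le_d_linf (z n)
    have h4 : d * linf (z n) ≤ d * M := Nat.mul_le_mul_left d hM
    have e : 2*d*M = d*M + d*M := by ring
    omega
  have hn2d : n ≤ 2*d*M := by
    have h5 : M ≤ 2*d*M := Nat.le_mul_of_pos_left M (by omega)
    have h6 : max (max M (linf (z n))) (l1 (z 0 - z n)) ≤ 2*d*M :=
      max_le (max_le h5 (le_trans hM h5)) hL
    omega
  have hM1 : 1 ≤ M := by
    rcases Nat.eq_zero_or_pos M with h0 | h0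
    · rw [h0] at hn2d; simp at hn2d; omega
    · exact h0
  have hMr1 : (1:ℝ) ≤ (M:ℝ) := by exact_mod_cast hM1
  have hMrpos : (0:ℝ) < (M:ℝ) := by linarith
  have hnr : (n:ℝ) ≤ 2*(d:ℝ)*(M:ℝ) := by exact_mod_cast hn2d
  have hnr1 : (1:ℝ) ≤ (n:ℝ) := by exact_mod_cast hn
  have hMα : (0:ℝ) < (M:ℝ)^α := Real.rpow_pos_of_pos hMrpos α
  have hnu : ∀ i, nu α (z i) = ((max (linf (z i)) 1 : ℕ) : ℝ) ^ α := fun i => rfl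
  have hb1 : ∀ i, (1:ℝ) ≤ ((max (linf (z i)) 1 : ℕ) : ℝ) := fun i => by
    exact_mod_cast le_max_right (linf (z i)) 1
  have hbpos : ∀ i, (0:ℝ) < ((max (linf (z i)) 1 : ℕ) : ℝ) := fun i => lt_of_lt_of_le one_pos (hb1 i)
  have hpath := path_l1_le hz
  have hup : ∀ i ≤ n, linf (z i) ≤ M + i := by
    intro i hi
    have h1 : linf (z i) ≤ linf (z 0) + l1 (z i - z 0) := linf_sub_le _ _
    have h2 := hpath i hi 0 (Nat.zero_le i)
    omega
  have hlow : ∀ i ≤ n, M ≤ linf (z i) + i := by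
    intro i hi
    have h1 : linf (z 0) ≤ linf (z i) + l1 (z 0 - z i) := linf_sub_le _ _
    have h2 : l1 (z 0 - z i) = l1 (z i - z 0) := l1_sub_comm _ _
    have h3 := hpath i hi 0 (Nat.zero_le i)
    omega
  have hlowA : ∀ i ≤ n, l1 (z 0) ≤ l1 (z i) + i := by
    intro i hi
    have h1 : l1 (z 0) ≤ l1 (z i) + l1 (z 0 - z i) := l1_sub_le _ _
    have h2 : l1 (z 0 - z i) = l1 (z i - z 0) := l1_sub_comm _ _
    have h3 := hpath i hi 0 (Nat.zero_le i)
    omega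
  have hlowB : ∀ i ≤ n, l1 (z n) ≤ l1 (z i) + (n - i) := by
    intro i hi
    have h1 : l1 (z n) ≤ l1 (z i) + l1 (z n - z i) := l1_sub_le _ _
    have h3 := hpath n le_rfl i hi
    omega
  have hble : ∀ i ∈ Finset.range (n+1), ((max (linf (z i)) 1 : ℕ):ℝ) ≤ (2*(d:ℝ)+1)*(M:ℝ) := by
    intro i hi
    rw [Finset.mem_range] at hi
    have h1 := hup i (by omega)
    have e : (2*d+1)*M = 2*d*M + M := by ring
    have h2 : max (linf (z i)) 1 ≤ (2*d+1)*M := by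
      apply max_le <;> omega
    calc ((max (linf (z i)) 1 : ℕ):ℝ) ≤ (((2*d+1)*M : ℕ):ℝ) := by exact_mod_cast h2
      _ = (2*(d:ℝ)+1)*(M:ℝ) := by push_cast; ring
  have hblow : ∀ i ∈ Finset.range (n+1), (M:ℝ) - i ≤ ((max (linf (z i)) 1 : ℕ):ℝ) := by
    intro i hi
    rw [Finset.mem_range] at hi
    have h1 := hlow i (by omega)
    have h2 : (M:ℝ) ≤ (linf (z i):ℝ) + i := by exact_mod_cast h1
    have h3 : ((linf (z i):ℕ):ℝ) ≤ ((max (linf (z i)) 1 : ℕ):ℝ) := by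
      exact_mod_cast le_max_left (linf (z i)) 1
    linarith
  have hC0 : (0:ℝ) < 2 + 1/(1+α) := by
    have h5 : (0:ℝ) < 1/(1+α) := div_pos one_pos (by linarith)
    linarith
  have h2α : (0:ℝ) < (2:ℝ)^(-α) := Real.rpow_pos_of_pos (by norm_num) _
  have hdα : (0:ℝ) < (d:ℝ)^(-α) := Real.rpow_pos_of_pos (by linarith) _
  have h2d1α : (0:ℝ) < (2*(d:ℝ)+1)^α := Real.rpow_pos_of_pos (by linarith) _
  have hhalfM : ((M:ℝ)/2)^α = (M:ℝ)^α * (2:ℝ)^(-α) := by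
    rw [Real.div_rpow (le_of_lt hMrpos) (by norm_num) α, Real.rpow_neg (by norm_num)]
    ring
  constructor
  · -- LOWER BOUND
    rcases le_or_gt 0 α with hα0 | hα0
    · -- α ≥ 0
      set t := min n (M/2) with htdef
      have htn : t ≤ n := min_le_left _ _
      have hsub : Finset.range (t+1) ⊆ Finset.range (n+1) := Finset.range_subset_range.mpr (by omega)
      have hterm : ∀ i ∈ Finset.range (t+1), ((M:ℝ)/2)^α ≤ nu α (z i) := by
        intro i hi
        rw [Finset.mem_range] at hi
        have hit : i ≤ t := by omega
        have h2 := hblow i (Finset.mem_range.mpr (by omega))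
        have h5 : (i:ℝ) ≤ ((M/2 : ℕ):ℝ) := by
          exact_mod_cast le_trans hit (min_le_right n (M/2))
        have h6 : ((M/2 : ℕ):ℝ) ≤ (M:ℝ)/2 := Nat.cast_div_le
        rw [hnu]
        exact Real.rpow_le_rpow (by positivity) (by linarith) hα0
      have hsum1 : ((t:ℝ)+1) * ((M:ℝ)/2)^α ≤ ∑ i ∈ Finset.range (t+1), nu α (z i) := by
        have h := Finset.card_nsmul_le_sum (Finset.range (t+1))
          (fun i => nu α (z i)) (((M:ℝ)/2)^α) hterm
        rw [Finset.card_range] at h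
        have e : ((t+1 : ℕ) : ℝ) = (t:ℝ)+1 := by push_cast; ring
        rw [nsmul_eq_mul, e] at h
        exact h
      have hsum2 : ∑ i ∈ Finset.range (t+1), nu α (z i) ≤ ∑ i ∈ Finset.range (n+1), nu α (z i) :=
        Finset.sum_le_sum_of_subset_of_nonneg hsub (fun i _ _ => (nu_pos α (z i)).le)
      have ht1 : (n:ℝ)/(4*(d:ℝ)) ≤ (t:ℝ)+1 := by
        rcases Nat.le_total n (M/2) with hc | hc
        · have : t = n := min_eq_left hc
          rw [this]
          have h7 : (n:ℝ)/(4*(d:ℝ)) ≤ (n:ℝ) := div_le_self (by positivity) (by linarith)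
          linarith
        · have het : t = M/2 := min_eq_right hc
          have h8 : M ≤ 2*(M/2)+1 := by omega
          have h9 : (M:ℝ) ≤ 2*((M/2:ℕ):ℝ)+1 := by exact_mod_cast h8
          have h10 : (n:ℝ)/(4*(d:ℝ)) ≤ (M:ℝ)/2 := by
            rw [div_le_iff₀ (by linarith)]
            nlinarith
          rw [het]
          push_cast
          linarith
      calc c1e d α * n * (M:ℝ)^α
          ≤ ((2:ℝ)^(-α)/(4*(d:ℝ))) * n * (M:ℝ)^α := by
            apply mul_le_mul_of_nonneg_right
              (mul_le_mul_of_nonneg_right (min_le_right _ _) (Nat.cast_nonneg n)) (le_of_lt hMα)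
        _ = ((n:ℝ)/(4*(d:ℝ))) * ((M:ℝ)^α * (2:ℝ)^(-α)) := by ring
        _ ≤ ((t:ℝ)+1) * ((M:ℝ)^α * (2:ℝ)^(-α)) := by
            apply mul_le_mul_of_nonneg_right ht1 (by positivity)
        _ = ((t:ℝ)+1) * ((M:ℝ)/2)^α := by rw [hhalfM]
        _ ≤ ∑ i ∈ Finset.range (t+1), nu α (z i) := hsum1
        _ ≤ _ := hsum2
    · -- α < 0
      have hterm : ∀ i ∈ Finset.range (n+1), ((2*(d:ℝ)+1)*(M:ℝ))^α ≤ nu α (z i) := by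
        intro i hi
        rw [hnu]
        exact Real.rpow_le_rpow_of_nonpos (hbpos i) (hble i hi) (le_of_lt hα0)
      have hsum1 : ((n:ℝ)+1) * (((2*(d:ℝ)+1)*(M:ℝ))^α) ≤ ∑ i ∈ Finset.range (n+1), nu α (z i) := by
        have h := Finset.card_nsmul_le_sum (Finset.range (n+1))
          (fun i => nu α (z i)) ((((2*(d:ℝ)+1)*(M:ℝ))^α)) hterm
        rw [Finset.card_range] at h
        have e : ((n+1 : ℕ) : ℝ) = (n:ℝ)+1 := by push_cast; ring
        rw [nsmul_eq_mul, e] at h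
        exact h
      have emul : ((2*(d:ℝ)+1)*(M:ℝ))^α = (2*(d:ℝ)+1)^α * (M:ℝ)^α :=
        Real.mul_rpow (by linarith) (by linarith)
      calc c1e d α * n * (M:ℝ)^α
          ≤ (2*(d:ℝ)+1)^α * n * (M:ℝ)^α := by
            apply mul_le_mul_of_nonneg_right
              (mul_le_mul_of_nonneg_right (min_le_left _ _) (Nat.cast_nonneg n)) (le_of_lt hMα)
        _ ≤ ((n:ℝ)+1) * ((2*(d:ℝ)+1)^α * (M:ℝ)^α) := by
            have hpos : (0:ℝ) < (2*(d:ℝ)+1)^α * (M:ℝ)^α := mul_pos h2d1α hMα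
            nlinarith
        _ = ((n:ℝ)+1) * (((2*(d:ℝ)+1)*(M:ℝ))^α) := by rw [emul]
        _ ≤ _ := hsum1
  · -- UPPER BOUND
    have hfin : ∀ c : ℝ, c ≤ c2e d α → ∀ s : ℝ, s ≤ c * ((n:ℝ) * (M:ℝ)^α) →
        s ≤ c2e d α * n * (M:ℝ)^α := by
      intro c hc s hs
      calc s ≤ c * ((n:ℝ) * (M:ℝ)^α) := hs
        _ ≤ c2e d α * ((n:ℝ) * (M:ℝ)^α) := by
            apply mul_le_mul_of_nonneg_right hc (by positivity)
        _ = c2e d α * n * (M:ℝ)^α := by ring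
    have hp1 : (0:ℝ) < (2 + 1/(1+α))*(2:ℝ)^(-α) := mul_pos hC0 h2α
    have hp2 : (0:ℝ) < 2*(2 + 1/(1+α))*(d:ℝ)^(-α) := mul_pos (by linarith) hdα
    have hc2a : 2*(2*(d:ℝ)+1)^α ≤ c2e d α := by unfold c2e; linarith
    have hc2b : 2*(2:ℝ)^(-α) ≤ c2e d α := by unfold c2e; linarith
    have hc2c : (2 + 1/(1+α))*(2:ℝ)^(-α) ≤ c2e d α := by unfold c2e; linarith
    have hc2d : 2*(2 + 1/(1+α))*(d:ℝ)^(-α) ≤ c2e d α := by unfold c2e; linarith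
    have h2n1 : (n:ℝ)+1 ≤ 2*(n:ℝ) := by linarith
    rcases le_or_gt 0 α with hα0 | hα0
    · -- α ≥ 0
      have hterm : ∀ i ∈ Finset.range (n+1), nu α (z i) ≤ ((2*(d:ℝ)+1)*(M:ℝ))^α := by
        intro i hi
        rw [hnu]
        exact Real.rpow_le_rpow (by positivity) (hble i hi) hα0
      have hsum1 : ∑ i ∈ Finset.range (n+1), nu α (z i) ≤ ((n:ℝ)+1) * (((2*(d:ℝ)+1)*(M:ℝ))^α) := by
        have h := Finset.sum_le_card_nsmul (Finset.range (n+1))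
          (fun i => nu α (z i)) ((((2*(d:ℝ)+1)*(M:ℝ))^α)) hterm
        rw [Finset.card_range] at h
        have e : ((n+1 : ℕ) : ℝ) = (n:ℝ)+1 := by push_cast; ring
        rw [nsmul_eq_mul, e] at h
        exact h
      have emul : ((2*(d:ℝ)+1)*(M:ℝ))^α = (2*(d:ℝ)+1)^α * (M:ℝ)^α :=
        Real.mul_rpow (by linarith) (by linarith)
      apply hfin (2*(2*(d:ℝ)+1)^α) hc2a
      calc ∑ i ∈ Finset.range (n+1), nu α (z i)
          ≤ ((n:ℝ)+1) * (((2*(d:ℝ)+1)*(M:ℝ))^α) := hsum1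
        _ = ((n:ℝ)+1) * ((2*(d:ℝ)+1)^α * (M:ℝ)^α) := by rw [emul]
        _ ≤ (2*(n:ℝ)) * ((2*(d:ℝ)+1)^α * (M:ℝ)^α) := by
            apply mul_le_mul_of_nonneg_right h2n1 (by positivity)
        _ = (2*(2*(d:ℝ)+1)^α) * ((n:ℝ) * (M:ℝ)^α) := by ring
    · -- α < 0
      rcases le_or_gt n M with hnM | hnM
      · rcases le_or_gt (2*n) M with h2n | h2n
        · -- 2n ≤ M : all points far
          have h2nr : 2*(n:ℝ) ≤ (M:ℝ) := by exact_mod_cast h2n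
          have hterm : ∀ i ∈ Finset.range (n+1), nu α (z i) ≤ ((M:ℝ)/2)^α := by
            intro i hi
            have h2 := hblow i hi
            rw [Finset.mem_range] at hi
            have h3 : (i:ℝ) ≤ (n:ℝ) := by exact_mod_cast (by omega : i ≤ n)
            rw [hnu]
            exact Real.rpow_le_rpow_of_nonpos (by positivity) (by linarith) (le_of_lt hα0)
          have hsum1 : ∑ i ∈ Finset.range (n+1), nu α (z i) ≤ ((n:ℝ)+1) * (((M:ℝ)/2)^α) := by
            have h := Finset.sum_le_card_nsmul (Finset.range (n+1))
              (fun i => nu α (z i)) ((((M:ℝ)/2)^α)) hterm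
            rw [Finset.card_range] at h
            have e : ((n+1 : ℕ) : ℝ) = (n:ℝ)+1 := by push_cast; ring
            rw [nsmul_eq_mul, e] at h
            exact h
          apply hfin (2*(2:ℝ)^(-α)) hc2b
          calc ∑ i ∈ Finset.range (n+1), nu α (z i)
              ≤ ((n:ℝ)+1) * (((M:ℝ)/2)^α) := hsum1
            _ = ((n:ℝ)+1) * ((M:ℝ)^α * (2:ℝ)^(-α)) := by rw [hhalfM]
            _ ≤ (2*(n:ℝ)) * ((M:ℝ)^α * (2:ℝ)^(-α)) := by
                apply mul_le_mul_of_nonneg_right h2n1 (by positivity)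
            _ = (2*(2:ℝ)^(-α)) * ((n:ℝ) * (M:ℝ)^α) := by ring
        · -- n ≤ M < 2n
          have hMn2 : (M:ℝ) < 2*(n:ℝ) := by exact_mod_cast h2n
          have hnMr : (n:ℝ) ≤ (M:ℝ) := by exact_mod_cast hnM
          have hterm : ∀ i ∈ Finset.range (n+1),
              nu α (z i) ≤ max (((n - i : ℕ)):ℝ) 1 ^ α := by
            intro i hi
            have h2 := hblow i hi
            rw [Finset.mem_range] at hi
            have hcast : ((n - i : ℕ):ℝ) = (n:ℝ) - (i:ℝ) := by
              have : i ≤ n := by omega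
              push_cast [this]
              ring
            have h4 : max (((n - i : ℕ)):ℝ) 1 ≤ ((max (linf (z i)) 1 : ℕ):ℝ) := by
              apply max_le
              · rw [hcast]; linarith
              · exact hb1 i
            rw [hnu]
            exact Real.rpow_le_rpow_of_nonpos
              (lt_of_lt_of_le one_pos (le_max_right _ _)) h4 (le_of_lt hα0)
          have hsum1 : ∑ i ∈ Finset.range (n+1), nu α (z i)
              ≤ ∑ i ∈ Finset.range (n+1), max (((n - i : ℕ)):ℝ) 1 ^ α :=
            Finset.sum_le_sum hterm
          have hrefl : ∑ i ∈ Finset.range (n+1), max (((n - i : ℕ)):ℝ) 1 ^ α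
              = ∑ i ∈ Finset.range (n+1), max ((i:ℕ):ℝ) 1 ^ α := by
            have h := Finset.sum_range_reflect (fun j => max ((j:ℕ):ℝ) 1 ^ α) (n+1)
            simp only [Nat.add_sub_cancel] at h
            exact h
          have hsum2 := sum_max_rpow hα hα0 n hn
          have hnpos : (0:ℝ) < (n:ℝ) := by linarith
          have e5 : (n:ℝ)^(1+α) = (n:ℝ) * (n:ℝ)^α := by
            rw [Real.rpow_add hnpos, Real.rpow_one]
          have e6 : (n:ℝ)^α ≤ ((M:ℝ)/2)^α := by
            apply Real.rpow_le_rpow_of_nonpos (by linarith) (by linarith) (le_of_lt hα0)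
          apply hfin ((2 + 1/(1+α))*(2:ℝ)^(-α)) hc2c
          calc ∑ i ∈ Finset.range (n+1), nu α (z i)
                ≤ ∑ i ∈ Finset.range (n+1), max ((i:ℕ):ℝ) 1 ^ α := by rw [← hrefl]; exact hsum1
              _ ≤ (2 + 1/(1+α)) * (n:ℝ)^(1+α) := hsum2
              _ = (2 + 1/(1+α)) * ((n:ℝ) * (n:ℝ)^α) := by rw [e5]
              _ ≤ (2 + 1/(1+α)) * ((n:ℝ) * ((M:ℝ)^α * (2:ℝ)^(-α))) := by
                  rw [← hhalfM]
                  apply mul_le_mul_of_nonneg_left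
                    (mul_le_mul_of_nonneg_left e6 (by positivity)) (le_of_lt hC0)
              _ = ((2 + 1/(1+α))*(2:ℝ)^(-α)) * ((n:ℝ) * (M:ℝ)^α) := by ring
      · -- M < n : geodesic-type case
        have hAB : n ≤ l1 (z 0) + l1 (z n) := by
          have h1 : max (max M (linf (z n))) (l1 (z 0 - z n)) ≤ max M (l1 (z 0 - z n)) := by
            apply max_le (max_le (le_max_left _ _) _) (le_max_right _ _)
            exact le_trans hM (le_max_left _ _)
          have h2 := le_trans hmax h1
          have h3 := l1_sub_le' (z 0) (z n)
          rcases max_cases M (l1 (z 0 - z n)) with ⟨he, _⟩ | ⟨he, _⟩ <;> omega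
        set A := l1 (z 0) with hAdef
        set m := min A n with hmdef
        have hmn : m ≤ n := min_le_right _ _
        have hmA : m ≤ A := min_le_left _ _
        set f : ℕ → ℝ := fun j => max (j:ℝ) 1 ^ α with hfdef
        have hfpos : ∀ j, 0 < f j := fun j =>
          Real.rpow_pos_of_pos (lt_of_lt_of_le one_pos (le_max_right _ _)) α
        have hterm : ∀ i ∈ Finset.range (n+1),
            nu α (z i) ≤ (d:ℝ)^(-α) * f (max (m - i) (i - m)) := by
          intro i hi
          rw [Finset.mem_range] at hi
          have hin : i ≤ n := by omega
          have h1 := hlowA i hin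
          have h2 := hlowB i hin
          have h34 : l1 (z i) ≤ d * max (linf (z i)) 1 :=
            le_trans (l1_le_d_linf _) (Nat.mul_le_mul_left d (le_max_left _ _))
          have hm4 := min_choice A n
          rw [← hmdef] at hm4
          have h6 : max (m - i) (i - m) ≤ l1 (z i) := by
            apply max_le <;> omega
          have h7 : ((max (m - i) (i - m) : ℕ):ℝ) ≤ (d:ℝ) * ((max (linf (z i)) 1 : ℕ):ℝ) := by
            exact_mod_cast le_trans h6 h34
          have h8 : max ((max (m - i) (i - m) : ℕ):ℝ) 1 / (d:ℝ) ≤ ((max (linf (z i)) 1 : ℕ):ℝ) := by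
            rw [div_le_iff₀ (by linarith)]
            apply max_le
            · calc ((max (m - i) (i - m) : ℕ):ℝ) ≤ (d:ℝ) * ((max (linf (z i)) 1 : ℕ):ℝ) := h7
                _ = ((max (linf (z i)) 1 : ℕ):ℝ) * (d:ℝ) := mul_comm _ _
            · nlinarith [hb1 i]
          have h9 : nu α (z i) ≤ (max ((max (m - i) (i - m) : ℕ):ℝ) 1 / (d:ℝ)) ^ α := by
            rw [hnu]
            apply Real.rpow_le_rpow_of_nonpos _ h8 (le_of_lt hα0)
            apply div_pos (lt_of_lt_of_le one_pos (le_max_right _ _)) (by linarith)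
          have h10 : (max ((max (m - i) (i - m) : ℕ):ℝ) 1 / (d:ℝ)) ^ α
              = max ((max (m - i) (i - m) : ℕ):ℝ) 1 ^ α * (d:ℝ)^(-α) := by
            rw [Real.div_rpow (le_trans zero_le_one (le_max_right _ _)) (by linarith) α,
              Real.rpow_neg (by linarith)]
            ring
          calc nu α (z i) ≤ (max ((max (m - i) (i - m) : ℕ):ℝ) 1 / (d:ℝ)) ^ α := h9
            _ = max ((max (m - i) (i - m) : ℕ):ℝ) 1 ^ α * (d:ℝ)^(-α) := h10
            _ = (d:ℝ)^(-α) * f (max (m - i) (i - m)) := by rw [hfdef]; ring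
        have hsum1 : ∑ i ∈ Finset.range (n+1), nu α (z i)
            ≤ (d:ℝ)^(-α) * ∑ i ∈ Finset.range (n+1), f (max (m - i) (i - m)) := by
          rw [Finset.mul_sum]
          exact Finset.sum_le_sum hterm
        have hsplit : ∑ i ∈ Finset.range (n+1), f (max (m - i) (i - m))
            ≤ 2 * ∑ j ∈ Finset.range (n+1), f j := by
          have e1 : Finset.range (n+1) = Finset.range (m+1) ∪ Finset.Ico (m+1) (n+1) := by
            simp only [Finset.range_eq_Ico]
            rw [Finset.Ico_union_Ico_eq_Ico (Nat.zero_le _) (by omega)]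
          have hdisj : Disjoint (Finset.range (m+1)) (Finset.Ico (m+1) (n+1)) := by
            rw [Finset.range_eq_Ico]
            exact Finset.Ico_disjoint_Ico_consecutive 0 (m+1) (n+1)
          have esum : ∑ i ∈ Finset.range (n+1), f (max (m - i) (i - m))
              = ∑ i ∈ Finset.range (m+1), f (max (m - i) (i - m))
                + ∑ i ∈ Finset.Ico (m+1) (n+1), f (max (m - i) (i - m)) := by
            rw [e1, Finset.sum_union hdisj]
          rw [esum]
          have hA1 : ∑ i ∈ Finset.range (m+1), f (max (m - i) (i - m))
              = ∑ j ∈ Finset.range (m+1), f j := by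
            have hc : ∀ i ∈ Finset.range (m+1), f (max (m - i) (i - m)) = f (m - i) := by
              intro i hi
              rw [Finset.mem_range] at hi
              congr 1
              omega
            rw [Finset.sum_congr rfl hc]
            have h := Finset.sum_range_reflect f (m+1)
            simpa only [Nat.add_sub_cancel] using h
          have hB1 : ∑ i ∈ Finset.Ico (m+1) (n+1), f (max (m - i) (i - m))
              ≤ ∑ j ∈ Finset.range (n+1), f j := by
            have hc : ∀ i ∈ Finset.Ico (m+1) (n+1), f (max (m - i) (i - m)) = f (i - m) := by
              intro i hi
              rw [Finset.mem_Ico] at hi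
              congr 1
              omega
            rw [Finset.sum_congr rfl hc, Finset.sum_Ico_eq_sum_range]
            have hc2 : ∀ j ∈ Finset.range (n+1-(m+1)), f (m+1+j - m) = f (j+1) := by
              intro j hj
              congr 1
              omega
            rw [Finset.sum_congr rfl hc2]
            calc ∑ j ∈ Finset.range (n+1-(m+1)), f (j+1)
                ≤ ∑ j ∈ Finset.range n, f (j+1) :=
                  Finset.sum_le_sum_of_subset_of_nonneg
                    (Finset.range_subset_range.mpr (by omega)) (fun j _ _ => (hfpos _).le)
              _ ≤ ∑ j ∈ Finset.range (n+1), f j := by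
                  rw [Finset.sum_range_succ' f n]
                  have := (hfpos 0).le
                  linarith
          have hS : ∑ j ∈ Finset.range (m+1), f j ≤ ∑ j ∈ Finset.range (n+1), f j :=
            Finset.sum_le_sum_of_subset_of_nonneg
              (Finset.range_subset_range.mpr (by omega)) (fun j _ _ => (hfpos _).le)
          linarith [hA1, hB1, hS]
        have hsum2 : ∑ j ∈ Finset.range (n+1), f j ≤ (2 + 1/(1+α)) * (n:ℝ)^(1+α) :=
          sum_max_rpow hα hα0 n hn
        have hnpos : (0:ℝ) < (n:ℝ) := by linarith
        have e5 : (n:ℝ)^(1+α) = (n:ℝ) * (n:ℝ)^α := by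
          rw [Real.rpow_add hnpos, Real.rpow_one]
        have e6 : (n:ℝ)^α ≤ (M:ℝ)^α := by
          apply Real.rpow_le_rpow_of_nonpos hMrpos _ (le_of_lt hα0)
          exact_mod_cast hnM.le
        apply hfin (2*(2 + 1/(1+α))*(d:ℝ)^(-α)) hc2d
        calc ∑ i ∈ Finset.range (n+1), nu α (z i)
              ≤ (d:ℝ)^(-α) * ∑ i ∈ Finset.range (n+1), f (max (m - i) (i - m)) := hsum1
            _ ≤ (d:ℝ)^(-α) * (2 * ∑ j ∈ Finset.range (n+1), f j) := by
                apply mul_le_mul_of_nonneg_left (by linarith [hsplit]) (le_of_lt hdα)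
            _ ≤ (d:ℝ)^(-α) * (2 * ((2 + 1/(1+α)) * (n:ℝ)^(1+α))) := by
                apply mul_le_mul_of_nonneg_left _ (le_of_lt hdα)
                linarith [hsum2]
            _ = (2*(2 + 1/(1+α))*(d:ℝ)^(-α)) * ((n:ℝ) * (n:ℝ)^α) := by rw [e5]; ring
            _ ≤ (2*(2 + 1/(1+α))*(d:ℝ)^(-α)) * ((n:ℝ) * (M:ℝ)^α) := by
                apply mul_le_mul_of_nonneg_left
                  (mul_le_mul_of_nonneg_left e6 (by positivity)) (by positivity)

theorem path_volume' (d : ℕ) (hd : 1 ≤ d) (α : ℝ) (hα : -1 < α) :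
    ∃ c₁ c₂ : ℝ, 0 < c₁ ∧ 0 < c₂ ∧
      ∀ (n : ℕ), 1 ≤ n → ∀ z : ℕ → Fin d → ℤ, IsPath z n →
        n ≤ max (max (linf (z 0)) (linf (z n))) (l1 (z 0 - z n)) →
        c₁ * n * ((max (linf (z 0)) (linf (z n)) : ℕ) : ℝ) ^ α ≤
            ∑ i ∈ Finset.range (n + 1), nu α (z i) ∧
          ∑ i ∈ Finset.range (n + 1), nu α (z i) ≤
            c₂ * n * ((max (linf (z 0)) (linf (z n)) : ℕ) : ℝ) ^ α := by
  refine ⟨c1e d α, c2e d α, c1e_pos d hd α, c2e_pos d hd α hα, ?_⟩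
  intro n hn z hz hmax
  rcases le_total (linf (z n)) (linf (z 0)) with hM | hM
  · have h := aux_main d hd α hα n hn z hz hM hmax
    rwa [max_eq_left hM]
  · -- reverse the path
    set w : ℕ → Fin d → ℤ := fun i => z (n - i) with hw
    have hw0 : w 0 = z n := by simp [hw]
    have hwn : w n = z 0 := by simp [hw]
    have hwpath : IsPath w n := by
      intro i hi
      have hlt : n - i - 1 < n := by omega
      have h1 := hz (n - i - 1) hlt
      have e2 : n - i - 1 + 1 = n - i := by omega
      rw [e2] at h1
      have e3 : w (i+1) = z (n - i - 1) := rfl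
      have e4 : w i = z (n - i) := rfl
      rw [e3, e4, l1_sub_comm]
      exact h1
    have hMw : linf (w n) ≤ linf (w 0) := by rw [hw0, hwn]; exact hM
    have hmaxw : n ≤ max (max (linf (w 0)) (linf (w n))) (l1 (w 0 - w n)) := by
      rw [hw0, hwn, l1_sub_comm, max_comm (linf (z n)) (linf (z 0))]
      exact hmax
    have h := aux_main d hd α hα n hn w hwpath hMw hmaxw
    have hsum : ∑ i ∈ Finset.range (n+1), nu α (w i) = ∑ i ∈ Finset.range (n+1), nu α (z i) := by
      have h2 := Finset.sum_range_reflect (fun j => nu α (z j)) (n+1)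
      simp only [Nat.add_sub_cancel] at h2
      exact h2
    rw [hsum, hw0] at h
    rwa [max_eq_right hM]

/-- Volume of a path: if `z_0, …, z_n` is a path with
`max{|z_0|, |z_n|, |z_0 - z_n|₁} ≥ n ≥ 1`, then
`c₁ n (max(|z_0|,|z_n|))^α ≤ ∑_{i=0}^n ν_{z_i} ≤ c₂ n (max(|z_0|,|z_n|))^α`. -/
theorem path_volume (d : ℕ) (hd : 1 ≤ d) (α : ℝ) (hα : -1 < α) :
    ∃ c₁ c₂ : ℝ, 0 < c₁ ∧ 0 < c₂ ∧
      ∀ (n : ℕ), 1 ≤ n → ∀ z : ℕ → Fin d → ℤ, IsPath z n →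
        n ≤ max (max (linf (z 0)) (linf (z n))) (l1 (z 0 - z n)) →
        c₁ * n * ((max (linf (z 0)) (linf (z n)) : ℕ) : ℝ) ^ α ≤
            ∑ i ∈ Finset.range (n + 1), nu α (z i) ∧
          ∑ i ∈ Finset.range (n + 1), nu α (z i) ≤
            c₂ * n * ((max (linf (z 0)) (linf (z n)) : ℕ) : ℝ) ^ α := by
  exact path_volume' d hd α hα
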